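/- Let p ≥ 1 and let q₁,…,q_p and r₁,…,r_p be positive real numbers. On ℝ^{p+1} × ℝ^{p+1} with coordinates (x₀,x₁,…,x_p; ξ₀,ξ₁,…,ξ_p), consider the quadratic form Q(x,ξ) = −ξ₀² + Σ_{i=1}^p q_i·(x_{i−1} − x_i)² + Σ_{i=1}^p r_i·ξ_i², and let F = J·H be the 2(p+1) × 2(p+1) real matrix where H is the Hessian matrix of Q (the constant matrix of its second partial derivatives in (x,ξ)) and J = [[0, I_{p+1}],[−I_{p+1}, 0]]. Then the characteristic polynomial satisfies det(λ·I + F) = λ²·ψ(λ) for a polynomial ψ of degree 2p with ψ(0) = −(∏_{j=1}^p 4q_j)·(∏_{j=1}^p r_j)·(Σ_{j=1}^p r_j^{−1} − 1). -/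

import Mathlib

open Matrix Polynomial

/-! ### Auxiliary definitions -/

/-- The difference vectors `e_{i} - e_{i+1}` in `ℝ^{p+1}`. -/
def vvAux {p : ℕ} (i : Fin p) : Fin (p+1) → ℝ :=
  fun k => (if k = i.castSucc then 1 else 0) - (if k = i.succ then 1 else 0)

/-- The diagonal of the ξ-Hessian: `(-2, 2r₁, …, 2r_p)`. -/
def ddAux {p : ℕ} (r : Fin p → ℝ) : Fin (p+1) → ℝ := Fin.cons (-2) (fun i => 2 * r i)

/-- The ξ-block of the Hessian. -/
def BBAux {p : ℕ} (r : Fin p → ℝ) : Matrix (Fin (p+1)) (Fin (p+1)) ℝ := diagonal (ddAux r)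

/-- The x-block of the Hessian. -/
def AAAux {p : ℕ} (q : Fin p → ℝ) : Matrix (Fin (p+1)) (Fin (p+1)) ℝ :=
  of fun k l => ∑ i, 2 * q i * (vvAux i k * vvAux i l)

/-- The `(p+1) × p` matrix whose columns are the difference vectors. -/
def MvAux (p : ℕ) : Matrix (Fin (p+1)) (Fin p) ℝ := of fun k i => vvAux i k

/-! ### Auxiliary lemmas -/

lemma eval_charpoly_aux {n : Type*} [Fintype n] [DecidableEq n] (M : Matrix n n ℝ) (t : ℝ) :
    (M.charpoly).eval t = (t • (1 : Matrix n n ℝ) - M).det := by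
  rw [Matrix.charpoly, ← Polynomial.coe_evalRingHom, RingHom.map_det]
  congr 1
  ext i j
  by_cases h : i = j <;>
    simp [h, charmatrix_apply_eq, charmatrix_apply_ne, Matrix.one_apply, Matrix.smul_apply,
      Matrix.sub_apply]

lemma symm_eq_of_quad_aux {n : Type*} [Fintype n] [DecidableEq n] (M N : Matrix n n ℝ)
    (hM : M.IsSymm) (hN : N.IsSymm)
    (h : ∀ w : n → ℝ, w ⬝ᵥ M.mulVec w = w ⬝ᵥ N.mulVec w) : M = N := by
  have key : ∀ (G : Matrix n n ℝ), G.IsSymm → (∀ w : n → ℝ, w ⬝ᵥ G.mulVec w = 0) → G = 0 := by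
    intro G hG h0
    ext i j
    have hdot : ∀ (u v : n → ℝ), u ⬝ᵥ G.mulVec v = ∑ a, ∑ b, u a * G a b * v b := by
      intro u v
      simp [dotProduct, Matrix.mulVec, Finset.mul_sum, mul_assoc]
    have e1 : ∀ a b : n, (Pi.single a 1 : n → ℝ) ⬝ᵥ G.mulVec (Pi.single b 1) = G a b := by
      intro a b
      rw [hdot]
      simp [Pi.single_apply, Finset.sum_ite_eq', Finset.sum_ite_eq]
    have h2 := h0 (Pi.single i 1 + Pi.single j 1)
    rw [Matrix.mulVec_add, dotProduct_add, add_dotProduct, add_dotProduct] at h2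
    rw [e1, e1, e1, e1] at h2
    have hii := h0 (Pi.single i 1); rw [e1] at hii
    have hjj := h0 (Pi.single j 1); rw [e1] at hjj
    have hsym : G i j = G j i := by
      have := congrArg (fun M : Matrix n n ℝ => M i j) hG
      simpa [Matrix.transpose_apply] using this.symm
    have : G i j + G j i = 0 := by linarith
    simp only [Matrix.zero_apply]
    linarith [hsym]
  have := key (M - N) (by simp [Matrix.IsSymm, Matrix.transpose_sub, hM.eq, hN.eq])
    (by intro w; simp [Matrix.sub_mulVec, dotProduct_sub, h w])
  ext i j
  have := congrArg (fun M : Matrix n n ℝ => M i j) this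
  simpa [sub_eq_zero] using this

lemma det_smul_one_add_mul_aux {n m : Type*} [Fintype n] [Fintype m] [DecidableEq n]
    [DecidableEq m] {μ : ℝ} (hμ : μ ≠ 0) (P : Matrix n m ℝ) (Q : Matrix m n ℝ) :
    (μ • (1 : Matrix n n ℝ) + P * Q).det
      = μ ^ (Fintype.card n) * (μ ^ (Fintype.card m))⁻¹
        * (μ • (1 : Matrix m m ℝ) + Q * P).det := by
  have h1 : μ • (1 : Matrix n n ℝ) + P * Q = μ • (1 + (μ⁻¹ • P) * Q) := by
    rw [smul_add, Matrix.smul_mul, smul_smul, mul_inv_cancel₀ hμ, one_smul]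
  have h2 : (1 : Matrix m m ℝ) + Q * (μ⁻¹ • P) = μ⁻¹ • (μ • 1 + Q * P) := by
    rw [smul_add, smul_smul, inv_mul_cancel₀ hμ, one_smul, Matrix.mul_smul]
  rw [h1, Matrix.det_smul, Matrix.det_one_add_mul_comm, h2, Matrix.det_smul, inv_pow]
  ring

lemma det_blocks_smul_aux {n : Type*} [Fintype n] [DecidableEq n] {lam : ℝ} (h : lam ≠ 0)
    (A B : Matrix n n ℝ) :
    (fromBlocks (lam • 1) B (-A) (lam • (1 : Matrix n n ℝ))).det
      = ((lam ^ 2) • (1 : Matrix n n ℝ) + B * A).det := by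
  letI : Invertible (lam • (1 : Matrix n n ℝ)) :=
    ⟨lam⁻¹ • 1, by rw [Matrix.smul_mul, Matrix.mul_smul, smul_smul, inv_mul_cancel₀ h, one_smul,
      Matrix.mul_one], by rw [Matrix.smul_mul, Matrix.mul_smul, smul_smul, mul_inv_cancel₀ h,
      one_smul, Matrix.mul_one]⟩
  rw [Matrix.det_fromBlocks₂₂]
  have hinv : ⅟(lam • (1 : Matrix n n ℝ)) = lam⁻¹ • 1 := rfl
  rw [hinv]
  have key : lam • 1 - B * (lam⁻¹ • 1) * (-A)
      = lam⁻¹ • ((lam ^ 2) • (1 : Matrix n n ℝ) + B * A) := by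
    rw [Matrix.mul_smul, Matrix.mul_one, Matrix.smul_mul, Matrix.mul_neg, smul_neg, sub_neg_eq_add,
      smul_add, smul_smul,
      show lam⁻¹ * lam ^ 2 = lam from by rw [pow_two, ← mul_assoc, inv_mul_cancel₀ h, one_mul]]
  rw [key, Matrix.det_smul, Matrix.det_smul, Matrix.det_one, mul_one, ← mul_assoc,
    ← mul_pow, mul_inv_cancel₀ h, one_pow, one_mul]

lemma detTpp_aux {p : ℕ} (r : Fin p → ℝ) (hr : ∀ i, 0 < r i) :
    (Matrix.of fun i j : Fin p => -2 + (if i = j then 2 * r i else 0)).det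
      = (∏ i, 2 * r i) * (1 - ∑ i, (r i)⁻¹) := by
  have hg : ∀ i, 2 * r i ≠ 0 := fun i => by have := hr i; positivity
  have hM : (Matrix.of fun i j : Fin p => -2 + (if i = j then 2 * r i else 0))
      = diagonal (fun i => 2 * r i)
        + replicateCol Unit (fun _ => (-2 : ℝ)) * replicateRow Unit (fun _ => (1 : ℝ)) := by
    ext i j
    simp [Matrix.mul_apply, Matrix.diagonal, Matrix.one_apply, add_comm]
  have hA : IsUnit (diagonal (fun i => 2 * r i)).det := by
    rw [Matrix.det_diagonal]
    exact isUnit_iff_ne_zero.mpr (Finset.prod_ne_zero_iff.mpr fun i _ => hg i)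
  have hdiaginv : (diagonal (fun i => 2 * r i))⁻¹
      = diagonal (fun i => (2 * r i)⁻¹) := by
    apply Matrix.inv_eq_right_inv
    rw [Matrix.diagonal_mul_diagonal]
    rw [show (fun i => (2 * r i) * (2 * r i)⁻¹) = fun _ : Fin p => (1:ℝ) from
      funext fun i => mul_inv_cancel₀ (hg i), Matrix.diagonal_one]
  rw [hM, Matrix.det_add_replicateCol_mul_replicateRow hA]
  rw [Matrix.det_diagonal, hdiaginv]
  congr 1
  rw [Matrix.det_unique]
  simp only [Matrix.add_apply, Matrix.one_apply_eq, Matrix.mul_apply, Matrix.replicateRow_apply,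
    Matrix.replicateCol_apply, Matrix.diagonal_apply]
  have key : ∀ i : Fin p, (∑ x_1 : Fin p, 1 * if x_1 = i then (2 * r x_1)⁻¹ else 0) * (-2)
      = -(r i)⁻¹ := by
    intro i
    simp only [one_mul, Finset.sum_ite_eq', Finset.mem_univ, if_pos, mul_inv]
    field_simp
  rw [Finset.sum_congr rfl fun i _ => key i]
  rw [Finset.sum_neg_distrib]
  ring

lemma Mv_mul_S_aux {p : ℕ} :
    MvAux p * (Matrix.of fun i j : Fin p => if i ≤ j then (1:ℝ) else 0)
      = Matrix.of fun (k : Fin (p+1)) (i : Fin p) =>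
          (if k = 0 then (1:ℝ) else 0) - (if k = i.succ then 1 else 0) := by
  ext k i
  simp only [MvAux, Matrix.mul_apply, Matrix.of_apply, mul_ite, mul_one, mul_zero]
  set g : ℕ → ℝ := fun j => if (k:ℕ) = j then 1 else 0 with hg
  set F : ℕ → ℝ := fun j => if j ≤ (i:ℕ) then g j - g (j+1) else 0 with hF
  have hterm : ∀ a : Fin p, (if a ≤ i then vvAux a k else 0) = F (a:ℕ) := by
    intro a
    simp only [hF, vvAux, hg, Fin.le_def, Fin.ext_iff, Fin.coe_castSucc, Fin.val_succ]
  rw [Finset.sum_congr rfl (fun a _ => hterm a), Fin.sum_univ_eq_sum_range F p]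
  have hle : (i:ℕ) + 1 ≤ p := Nat.succ_le_of_lt i.isLt
  rw [← Finset.sum_subset (Finset.range_subset_range.mpr hle)
    (fun x _ hx => if_neg (fun hc => hx (Finset.mem_range.mpr (Nat.lt_succ_of_le hc))))]
  rw [Finset.sum_congr rfl (fun j hj => if_pos (Nat.lt_succ_iff.mp (Finset.mem_range.mp hj)))]
  rw [Finset.sum_range_sub' g ((i:ℕ)+1)]
  simp only [hg, Fin.ext_iff, Fin.val_zero, Fin.val_succ]

lemma S_det_aux {p : ℕ} :
    (Matrix.of fun i j : Fin p => if i ≤ j then (1:ℝ) else 0).det = 1 := by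
  have ht : (Matrix.of fun i j : Fin p => if i ≤ j then (1:ℝ) else 0).BlockTriangular id :=
    fun i j h => if_neg (not_le.mpr h)
  rw [Matrix.det_of_upperTriangular ht]
  simp

lemma Nw_conj_aux {p : ℕ} (r : Fin p → ℝ) :
    (Matrix.of fun (k : Fin (p+1)) (i : Fin p) =>
        (if k = 0 then (1:ℝ) else 0) - (if k = i.succ then 1 else 0))ᵀ
      * Matrix.diagonal (ddAux r)
      * (Matrix.of fun (k : Fin (p+1)) (i : Fin p) =>
        (if k = 0 then (1:ℝ) else 0) - (if k = i.succ then 1 else 0))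
    = Matrix.of fun i j : Fin p => -2 + (if i = j then 2 * r i else 0) := by
  ext i j
  rw [Matrix.mul_apply]
  have hrow : ∀ k, ((Matrix.of fun (k : Fin (p+1)) (i : Fin p) =>
        (if k = 0 then (1:ℝ) else 0) - (if k = i.succ then 1 else 0))ᵀ
      * Matrix.diagonal (ddAux r)) i k
      = ((if k = 0 then (1:ℝ) else 0) - (if k = i.succ then 1 else 0)) * ddAux r k := by
    intro k
    rw [Matrix.mul_diagonal, Matrix.transpose_apply, Matrix.of_apply]
  rw [Finset.sum_congr rfl fun k _ => by rw [hrow k]]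
  rw [Fin.sum_univ_succ]
  simp only [ddAux, Fin.cons_zero, Fin.cons_succ, Matrix.of_apply]
  rw [if_pos trivial, if_neg (fun hc => (Fin.succ_ne_zero i) hc.symm),
    if_neg (fun hc => (Fin.succ_ne_zero j) hc.symm)]
  have key : ∀ m : Fin p, ((if (m.succ : Fin (p+1)) = 0 then (1:ℝ) else 0)
        - (if m.succ = i.succ then 1 else 0)) * (2 * r m)
        * ((if (m.succ : Fin (p+1)) = 0 then (1:ℝ) else 0) - (if m.succ = j.succ then 1 else 0))
      = if m = i then (if m = j then 2 * r m else 0) else 0 := by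
    intro m
    simp only [Fin.succ_inj, if_neg (Fin.succ_ne_zero m)]
    by_cases h1 : m = i
    · by_cases h2 : m = j
      · simp only [if_pos h1, if_pos h2]; ring
      · simp only [if_pos h1, if_neg h2]; ring
    · by_cases h2 : m = j
      · simp only [if_neg h1, if_pos h2]; ring
      · simp only [if_neg h1, if_neg h2]; ring
  rw [Finset.sum_congr rfl fun m _ => key m, Finset.sum_ite_eq' Finset.univ i
    (fun m => if m = j then 2 * r m else 0)]
  simp only [Finset.mem_univ, if_pos]
  by_cases h : i = j <;> simp [h] <;> ring

lemma vv_dot_aux {p : ℕ} (i : Fin p) (x : Fin (p+1) → ℝ) :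
    (∑ k, vvAux i k * x k) = x i.castSucc - x i.succ := by
  simp [vvAux, sub_mul, Finset.sum_sub_distrib, Finset.sum_ite_eq', ite_mul]

lemma quad_AA_aux {p : ℕ} (q : Fin p → ℝ) (x : Fin (p+1) → ℝ) :
    x ⬝ᵥ (AAAux q).mulVec x = ∑ i, 2 * q i * (x i.castSucc - x i.succ)^2 := by
  have step : x ⬝ᵥ (AAAux q).mulVec x
      = ∑ i, 2 * q i * ((∑ k, vvAux i k * x k) * (∑ l, vvAux i l * x l)) := by
    simp only [dotProduct, Matrix.mulVec, AAAux, Matrix.of_apply, Finset.mul_sum,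
      Finset.sum_mul]
    refine Eq.trans (Finset.sum_congr rfl fun k _ => Finset.sum_comm) ?_
    rw [Finset.sum_comm]
    refine Finset.sum_congr rfl fun i _ => Eq.trans Finset.sum_comm ?_
    refine Finset.sum_congr rfl fun l _ => Finset.sum_congr rfl fun k _ => by ring
  rw [step]
  refine Finset.sum_congr rfl fun i _ => ?_
  rw [vv_dot_aux]
  ring

lemma quad_BB_aux {p : ℕ} (r : Fin p → ℝ) (x : Fin (p+1) → ℝ) :
    x ⬝ᵥ (BBAux r).mulVec x = -2 * (x 0)^2 + ∑ i, 2 * r i * (x i.succ)^2 := by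
  have step : x ⬝ᵥ (BBAux r).mulVec x = ∑ k, ddAux r k * (x k)^2 := by
    simp only [dotProduct, BBAux, mulVec_diagonal]
    refine Finset.sum_congr rfl fun k _ => by ring
  rw [step, Fin.sum_univ_succ]
  simp only [ddAux, Fin.cons_zero, Fin.cons_succ]

lemma AA_symm_aux {p : ℕ} (q : Fin p → ℝ) : (AAAux q).IsSymm := by
  ext k l
  simp only [Matrix.transpose_apply, AAAux, Matrix.of_apply]
  refine Finset.sum_congr rfl fun i _ => by ring

lemma detAA_aux {p : ℕ} (q : Fin p → ℝ) : (AAAux q).det = 0 := by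
  rw [← Matrix.exists_mulVec_eq_zero_iff]
  refine ⟨fun _ => 1, fun h => one_ne_zero (congrFun h 0), ?_⟩
  ext k
  simp only [Matrix.mulVec, dotProduct, AAAux, Matrix.of_apply, mul_one, Pi.zero_apply]
  rw [Finset.sum_comm]
  refine Finset.sum_eq_zero fun i _ => ?_
  have h0 : (∑ l, vvAux (p := p) i l) = 0 := by
    simpa using vv_dot_aux i (fun _ => (1:ℝ))
  calc ∑ l, 2 * q i * (vvAux i k * vvAux i l)
      = 2 * q i * vvAux i k * ∑ l, vvAux i l := by
        rw [Finset.mul_sum]; exact Finset.sum_congr rfl fun l _ => by ring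
    _ = 0 := by rw [h0, mul_zero]

lemma AA_factor_aux {p : ℕ} (q : Fin p → ℝ) :
    AAAux q = MvAux p * diagonal (fun i => 2 * q i) * (MvAux p)ᵀ := by
  ext k l
  rw [Matrix.mul_apply]
  have : ∀ i, (MvAux p * diagonal (fun i => 2 * q i)) k i * (MvAux p)ᵀ i l
      = vvAux i k * (2 * q i) * vvAux i l := by
    intro i
    rw [Matrix.mul_diagonal, Matrix.transpose_apply]
    rfl
  rw [Finset.sum_congr rfl fun i _ => this i]
  simp only [AAAux, Matrix.of_apply]
  exact Finset.sum_congr rfl fun i _ => by ring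

/-- For the hyperbolic quadratic form
`Q(x, ξ) = -ξ₀² + Σ qᵢ (x_{i-1} - x_i)² + Σ rᵢ ξᵢ²` on `ℝ^{p+1} × ℝ^{p+1}` with Hessian
matrix `H` (the symmetric matrix with `Q v = (1/2) ⟨v, H v⟩`) and `F = J H`,
one has `det(λ I + F) = λ² ψ(λ)` for a polynomial `ψ` of degree `2p` with
`ψ(0) = -(∏ 4 qⱼ)(∏ rⱼ)(Σ rⱼ⁻¹ - 1)`. -/
theorem det_hamilton_map_factorization (p : ℕ) (hp : 1 ≤ p) (q r : Fin p → ℝ)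
    (hq : ∀ i, 0 < q i) (hr : ∀ i, 0 < r i)
    (H : Matrix (Fin (p + 1) ⊕ Fin (p + 1)) (Fin (p + 1) ⊕ Fin (p + 1)) ℝ)
    (hHsymm : H.IsSymm)
    (hH : ∀ x ξ : Fin (p + 1) → ℝ,
      -(ξ 0) ^ 2 + (∑ i : Fin p, q i * (x i.castSucc - x i.succ) ^ 2)
          + ∑ i : Fin p, r i * (ξ i.succ) ^ 2
        = (1 / 2) * (Sum.elim x ξ ⬝ᵥ H.mulVec (Sum.elim x ξ))) :
    ∃ ψ : Polynomial ℝ, ψ.natDegree = 2 * p ∧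
      (∀ lam : ℝ,
        (lam • (1 : Matrix (Fin (p + 1) ⊕ Fin (p + 1)) (Fin (p + 1) ⊕ Fin (p + 1)) ℝ)
            + Matrix.fromBlocks 0 1 (-1) 0 * H).det = lam ^ 2 * ψ.eval lam) ∧
      ψ.eval 0
        = -((∏ j : Fin p, 4 * q j) * (∏ j : Fin p, r j) * ((∑ j : Fin p, (r j)⁻¹) - 1)) := by
  classical
  -- Identify `H` with the explicit block-diagonal Hessian.
  have hH0symm : (fromBlocks (AAAux q) 0 0 (BBAux r)).IsSymm := by
    unfold Matrix.IsSymm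
    rw [Matrix.fromBlocks_transpose, (AA_symm_aux q).eq,
      show (BBAux r)ᵀ = BBAux r from (Matrix.isSymm_diagonal (ddAux r) : (BBAux r).IsSymm).eq]
    simp
  have hHeq : H = fromBlocks (AAAux q) 0 0 (BBAux r) := by
    apply symm_eq_of_quad_aux _ _ hHsymm hH0symm
    intro w
    have h1 := hH (w ∘ Sum.inl) (w ∘ Sum.inr)
    rw [Sum.elim_comp_inl_inr] at h1
    simp only [Function.comp_apply] at h1
    have h3 : w = Sum.elim (w ∘ Sum.inl) (w ∘ Sum.inr) := (Sum.elim_comp_inl_inr w).symm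
    have hcomp : w ⬝ᵥ (fromBlocks (AAAux q) 0 0 (BBAux r)).mulVec w
        = (∑ i, 2 * q i * (w (Sum.inl i.castSucc) - w (Sum.inl i.succ))^2)
          + (-2 * (w (Sum.inr 0))^2 + ∑ i, 2 * r i * (w (Sum.inr i.succ))^2) := by
      conv_lhs => rw [h3]
      rw [Matrix.fromBlocks_mulVec, sumElim_dotProduct_sumElim]
      simp only [Sum.elim_comp_inl, Sum.elim_comp_inr, Matrix.zero_mulVec, add_zero, zero_add]
      rw [quad_AA_aux, quad_BB_aux]
      simp only [Function.comp_apply]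
    have ha : ∑ i, 2 * q i * (w (Sum.inl i.castSucc) - w (Sum.inl i.succ))^2
        = 2 * ∑ i, q i * (w (Sum.inl i.castSucc) - w (Sum.inl i.succ))^2 := by
      rw [Finset.mul_sum]; exact Finset.sum_congr rfl fun i _ => by ring
    have hb : ∑ i, 2 * r i * (w (Sum.inr i.succ))^2
        = 2 * ∑ i, r i * (w (Sum.inr i.succ))^2 := by
      rw [Finset.mul_sum]; exact Finset.sum_congr rfl fun i _ => by ring
    rw [hcomp, ha, hb]
    linarith [h1]
  -- The Hamiltonian matrix `J * H` in block form.
  have hJH : fromBlocks 0 1 (-1) 0 * H = fromBlocks 0 (BBAux r) (-(AAAux q)) 0 := by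
    rw [hHeq, Matrix.fromBlocks_multiply]
    simp
  -- Notation for the reduced `p × p` matrix.
  set Dq : Matrix (Fin p) (Fin p) ℝ := diagonal (fun i => 2 * q i) with hDq
  set W : Matrix (Fin p) (Fin p) ℝ := (MvAux p)ᵀ * (BBAux r * MvAux p * Dq) with hW
  refine ⟨((-W).charpoly).comp (X^2), ?_, ?_, ?_⟩
  · rw [Polynomial.natDegree_comp, Matrix.charpoly_natDegree_eq_dim, Polynomial.natDegree_X_pow,
      Fintype.card_fin, mul_comm]
  · intro lam
    rw [hJH]
    have heval : (((-W).charpoly).comp (X^2)).eval lam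
        = ((lam^2) • (1 : Matrix (Fin p) (Fin p) ℝ) + W).det := by
      rw [Polynomial.eval_comp, Polynomial.eval_pow, Polynomial.eval_X, eval_charpoly_aux,
        sub_neg_eq_add]
    by_cases hlam : lam = 0
    · subst hlam
      rw [zero_smul, zero_add]
      have hfac : fromBlocks (0 : Matrix (Fin (p+1)) (Fin (p+1)) ℝ) (BBAux r) (-(AAAux q)) 0
          = fromBlocks 0 1 (-1) 0 * fromBlocks (AAAux q) 0 0 (BBAux r) := by
        rw [Matrix.fromBlocks_multiply]; simp
      rw [hfac, Matrix.det_mul, Matrix.det_fromBlocks_zero₂₁, detAA_aux]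
      ring
    · have hblocks : lam • (1 : Matrix (Fin (p + 1) ⊕ Fin (p + 1)) (Fin (p + 1) ⊕ Fin (p + 1)) ℝ)
          + fromBlocks 0 (BBAux r) (-(AAAux q)) 0
          = fromBlocks (lam • 1) (BBAux r) (-(AAAux q)) (lam • 1) := by
        rw [← Matrix.fromBlocks_one, Matrix.fromBlocks_smul, Matrix.fromBlocks_add]
        simp
      rw [hblocks, det_blocks_smul_aux hlam]
      have hlam2 : lam^2 ≠ 0 := pow_ne_zero 2 hlam
      have hassoc : BBAux r * AAAux q = (BBAux r * MvAux p * Dq) * (MvAux p)ᵀ := by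
        rw [AA_factor_aux q, ← hDq, Matrix.mul_assoc, Matrix.mul_assoc, Matrix.mul_assoc]
      rw [hassoc, det_smul_one_add_mul_aux hlam2, heval]
      rw [Fintype.card_fin, Fintype.card_fin]
      have hpow : (lam^2) ^ (p+1) * ((lam^2) ^ p)⁻¹ = lam^2 := by
        rw [pow_succ]
        field_simp
      rw [hpow, ← hW]
  · -- value at zero
    have heval0 : (((-W).charpoly).comp (X^2)).eval 0 = W.det := by
      rw [Polynomial.eval_comp, Polynomial.eval_pow, Polynomial.eval_X, eval_charpoly_aux,
        sub_neg_eq_add]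
      norm_num
    rw [heval0]
    -- determinant of W
    have hWdet : W.det = ((MvAux p)ᵀ * BBAux r * MvAux p).det * ∏ i, 2 * q i := by
      rw [show W = ((MvAux p)ᵀ * BBAux r * MvAux p) * Dq from by
        rw [hW, Matrix.mul_assoc, Matrix.mul_assoc, Matrix.mul_assoc],
        Matrix.det_mul, hDq, Matrix.det_diagonal]
    -- congruence to the diagonal-plus-rank-one matrix
    set S : Matrix (Fin p) (Fin p) ℝ := Matrix.of fun i j : Fin p => if i ≤ j then (1:ℝ) else 0
      with hS
    have hTdet : ((MvAux p)ᵀ * BBAux r * MvAux p).det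
        = (∏ i, 2 * r i) * (1 - ∑ i, (r i)⁻¹) := by
      have hcongr : Sᵀ * ((MvAux p)ᵀ * BBAux r * MvAux p) * S
          = (MvAux p * S)ᵀ * BBAux r * (MvAux p * S) := by
        rw [Matrix.transpose_mul]
        simp only [Matrix.mul_assoc]
      have hdets : (Sᵀ * ((MvAux p)ᵀ * BBAux r * MvAux p) * S).det
          = ((MvAux p)ᵀ * BBAux r * MvAux p).det := by
        rw [Matrix.det_mul, Matrix.det_mul, Matrix.det_transpose, hS, S_det_aux]
        ring
      rw [← hdets, hcongr, hS, Mv_mul_S_aux]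
      have : BBAux r = Matrix.diagonal (ddAux r) := rfl
      rw [this, Nw_conj_aux, detTpp_aux r hr]
    rw [hWdet, hTdet]
    -- final arithmetic
    have h2r : (∏ i, 2 * r i) = 2^p * ∏ i, r i := by
      rw [Finset.prod_mul_distrib, Finset.prod_const, Finset.card_univ, Fintype.card_fin]
    have h2q : (∏ i, 2 * q i) = 2^p * ∏ i, q i := by
      rw [Finset.prod_mul_distrib, Finset.prod_const, Finset.card_univ, Fintype.card_fin]
    have h4q : (∏ j : Fin p, 4 * q j) = 4^p * ∏ j, q j := by
      rw [Finset.prod_mul_distrib, Finset.prod_const, Finset.card_univ, Fintype.card_fin]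
    have h4 : (4:ℝ)^p = 2^p * 2^p := by
      rw [← mul_pow]; norm_num
    rw [h2r, h2q, h4q, h4]
    ring
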